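/- Let k be a field and a, b ≥ 2 integers. Let X = X′ ⊕ J_a with X′ = ⊕_{i=1}^{r} J_{p_i} where every p_i ≥ a, and Y = Y′ ⊕ J_b with Y′ = ⊕_{j=1}^{s} J_{q_j} where every q_j ≥ b (r, s ≥ 0 allowed). Let C : X → Y be a k[T]-linear map with T²∘C = 0, and assume that the component c : J_a → J_b of C between the distinguished summands satisfies T∘c ≠ 0. Then there exist a k[T]-linear map C′ : X′ → Y′ with T²∘C′ = 0 and k[T]-module isomorphisms α : X → X′ ⊕ J_a and β : Y → Y′ ⊕ J_b such that β∘C = (C′ ⊕ τ)∘α, where τ : J_a → J_b is multiplication by T^{b−2}. In particular, the triple (X, Y, C) has a direct summand isomorphic to (J_a, J_b, τ). -/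

import Mathlib

open Polynomial

/-- `J k a` is the `k[T]`-module `k[T]/(T^a)` (with `T` the polynomial variable `X`). -/
abbrev J (k : Type*) [Field k] (a : ℕ) : Type _ :=
  Polynomial k ⧸ Ideal.span {(X : Polynomial k) ^ a}

/-- Multiplication by `T^e` as a `k[T]`-linear map `J_a → J_b`; it is well defined
when `b ≤ e + a`, and we set it to `0` otherwise. -/
noncomputable def mulTpow (k : Type*) [Field k] (a b e : ℕ) :
    J k a →ₗ[Polynomial k] J k b :=
  if h : b ≤ e + a then
    Submodule.liftQ (Ideal.span {(X : Polynomial k) ^ a})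
      ((Ideal.span {(X : Polynomial k) ^ b}).mkQ ∘ₗ
        ((X : Polynomial k) ^ e • (LinearMap.id : Polynomial k →ₗ[Polynomial k] Polynomial k)))
      (by
        refine Submodule.span_le.mpr ?_
        intro x hx
        rw [Set.mem_singleton_iff] at hx
        subst hx
        simp only [SetLike.mem_coe, LinearMap.mem_ker, LinearMap.comp_apply,
          LinearMap.smul_apply, LinearMap.id_apply, Submodule.mkQ_apply,
          Submodule.Quotient.mk_eq_zero, smul_eq_mul]
        exact Ideal.mem_span_singleton.mpr (by
          rw [← pow_add]; exact pow_dvd_pow X h))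
  else 0

section Aux
variable {k : Type*} [Field k]

lemma J_mk_smul (m : ℕ) (f g : Polynomial k) :
    f • (Submodule.Quotient.mk g : J k m) = Submodule.Quotient.mk (f * g) := by
  rw [← Submodule.Quotient.mk_smul, smul_eq_mul]

lemma exists_rep {m c : ℕ} (hc : c ≤ m) (v : J k m)
    (h : ((X : Polynomial k) ^ c) • v = 0) :
    ∃ f : Polynomial k, v = Submodule.Quotient.mk ((X : Polynomial k) ^ (m - c) * f) := by
  obtain ⟨g, rfl⟩ := Submodule.Quotient.mk_surjective _ v
  rw [J_mk_smul, Submodule.Quotient.mk_eq_zero, Ideal.mem_span_singleton] at h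
  obtain ⟨d, hd⟩ := h
  refine ⟨d, ?_⟩
  have hXc : (X : Polynomial k) ^ c ≠ 0 := pow_ne_zero _ X_ne_zero
  have h2 : (X : Polynomial k) ^ c * g
      = (X : Polynomial k) ^ c * ((X : Polynomial k) ^ (m - c) * d) := by
    rw [hd, ← mul_assoc, ← pow_add]
    congr 2
    omega
  rw [mul_left_cancel₀ hXc h2]

/-- Multiplication by a fixed polynomial `g` as a linear map `J_m → J_n`. -/
noncomputable def mulMap (k : Type*) [Field k] (m n : ℕ) (g : Polynomial k)
    (h : (X : Polynomial k) ^ n ∣ g * X ^ m) :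
    J k m →ₗ[Polynomial k] J k n :=
  Submodule.liftQ (Ideal.span {(X : Polynomial k) ^ m})
    ((Ideal.span {(X : Polynomial k) ^ n}).mkQ ∘ₗ
      (g • (LinearMap.id : Polynomial k →ₗ[Polynomial k] Polynomial k)))
    (by
      refine Submodule.span_le.mpr ?_
      intro x hx
      rw [Set.mem_singleton_iff] at hx
      subst hx
      simp only [SetLike.mem_coe, LinearMap.mem_ker, LinearMap.comp_apply,
        LinearMap.smul_apply, LinearMap.id_apply, Submodule.mkQ_apply,
        Submodule.Quotient.mk_eq_zero, smul_eq_mul]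
      exact Ideal.mem_span_singleton.mpr h)

lemma mulMap_mk (m n : ℕ) (g : Polynomial k) (h : (X : Polynomial k) ^ n ∣ g * X ^ m)
    (f : Polynomial k) :
    mulMap k m n g h (Submodule.Quotient.mk f) = Submodule.Quotient.mk (g * f) := by
  rw [mulMap, Submodule.liftQ_apply]
  simp only [LinearMap.comp_apply, LinearMap.smul_apply, LinearMap.id_apply,
    Submodule.mkQ_apply, smul_eq_mul]

lemma mulTpow_mk {a b : ℕ} (e : ℕ) (hba : b ≤ e + a) (f : Polynomial k) :
    mulTpow k a b e (Submodule.Quotient.mk f)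
      = Submodule.Quotient.mk ((X : Polynomial k) ^ e * f) := by
  rw [mulTpow, dif_pos hba, Submodule.liftQ_apply]
  simp only [LinearMap.comp_apply, LinearMap.smul_apply, LinearMap.id_apply,
    Submodule.mkQ_apply, smul_eq_mul]

end Aux

set_option maxHeartbeats 1000000 in
theorem split_off_Ja_Jb (k : Type*) [Field k] (a b : ℕ) (ha : 2 ≤ a) (hb : 2 ≤ b)
    (r s : ℕ) (p : Fin r → ℕ) (q : Fin s → ℕ)
    (hp : ∀ i, a ≤ p i) (hq : ∀ j, b ≤ q j)
    (C : (((i : Fin r) → J k (p i)) × J k a) →ₗ[Polynomial k]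
      (((j : Fin s) → J k (q j)) × J k b))
    (hC : ∀ x, ((X : Polynomial k) ^ 2) • C x = 0)
    (hcomp : ¬ ∀ x : J k a,
      (X : Polynomial k) •
        ((LinearMap.snd (Polynomial k) ((j : Fin s) → J k (q j)) (J k b))
          (C ((LinearMap.inr (Polynomial k) ((i : Fin r) → J k (p i)) (J k a)) x))) = 0) :
    ∃ C' : ((i : Fin r) → J k (p i)) →ₗ[Polynomial k] ((j : Fin s) → J k (q j)),
      (∀ x, ((X : Polynomial k) ^ 2) • C' x = 0) ∧
      ∃ (α : (((i : Fin r) → J k (p i)) × J k a) ≃ₗ[Polynomial k]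
          (((i : Fin r) → J k (p i)) × J k a))
        (β : (((j : Fin s) → J k (q j)) × J k b) ≃ₗ[Polynomial k]
          (((j : Fin s) → J k (q j)) × J k b)),
        β.toLinearMap ∘ₗ C = (C'.prodMap (mulTpow k a b (b - 2))) ∘ₗ α.toLinearMap := by
  classical
  set X' := (i : Fin r) → J k (p i) with hX'
  set Y' := (j : Fin s) → J k (q j) with hY'
  set A : X' →ₗ[Polynomial k] Y' :=
    (LinearMap.fst _ _ _) ∘ₗ C ∘ₗ (LinearMap.inl (Polynomial k) X' (J k a)) with hAdef
  set Dm : X' →ₗ[Polynomial k] J k b :=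
    (LinearMap.snd _ _ _) ∘ₗ C ∘ₗ (LinearMap.inl (Polynomial k) X' (J k a)) with hDdef
  set Bm : J k a →ₗ[Polynomial k] Y' :=
    (LinearMap.fst _ _ _) ∘ₗ C ∘ₗ (LinearMap.inr (Polynomial k) X' (J k a)) with hBdef
  set cm : J k a →ₗ[Polynomial k] J k b :=
    (LinearMap.snd _ _ _) ∘ₗ C ∘ₗ (LinearMap.inr (Polynomial k) X' (J k a)) with hcdef
  have hC1 : ∀ z, ((X : Polynomial k) ^ 2) • (C z).1 = 0 := by
    intro z
    have := congrArg Prod.fst (hC z)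
    simpa using this
  have hC2 : ∀ z, ((X : Polynomial k) ^ 2) • (C z).2 = 0 := by
    intro z
    have := congrArg Prod.snd (hC z)
    simpa using this
  have hA2 : ∀ x, ((X : Polynomial k) ^ 2) • A x = 0 := fun x => hC1 _
  have hD2 : ∀ x, ((X : Polynomial k) ^ 2) • Dm x = 0 := fun x => hC2 _
  have hB2 : ∀ x, ((X : Polynomial k) ^ 2) • Bm x = 0 := fun x => hC1 _
  have hc2 : ∀ x, ((X : Polynomial k) ^ 2) • cm x = 0 := fun x => hC2 _
  -- the distinguished component c determined by g
  obtain ⟨g, hg1⟩ := exists_rep hb (cm (Submodule.Quotient.mk 1)) (hc2 _)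
  have hcm : ∀ h : Polynomial k, cm (Submodule.Quotient.mk h)
      = Submodule.Quotient.mk (h * ((X : Polynomial k) ^ (b - 2) * g)) := by
    intro h
    have h1 : (Submodule.Quotient.mk h : J k a)
        = h • (Submodule.Quotient.mk 1 : J k a) := by rw [J_mk_smul, mul_one]
    rw [h1, map_smul, hg1, J_mk_smul]
  have hgX : ¬ (X : Polynomial k) ∣ g := by
    intro hdvd
    obtain ⟨g', rfl⟩ := hdvd
    apply hcomp
    intro x
    obtain ⟨h, rfl⟩ := Submodule.Quotient.mk_surjective _ x
    have : (LinearMap.snd (Polynomial k) Y' (J k b))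
        (C ((LinearMap.inr (Polynomial k) X' (J k a)) (Submodule.Quotient.mk h)))
        = cm (Submodule.Quotient.mk h) := rfl
    rw [this, hcm, J_mk_smul, Submodule.Quotient.mk_eq_zero]
    refine Ideal.mem_span_singleton.mpr ⟨h * g', ?_⟩
    have hb2 : b - 2 + 2 = b := by omega
    conv_rhs => rw [← hb2, pow_add]
    ring
  have hcop : IsCoprime ((X : Polynomial k) ^ a) g :=
    ((Polynomial.irreducible_X.coprime_iff_not_dvd).mpr hgX).pow_left
  obtain ⟨u, v, huv⟩ := hcop
  have hvg : ∀ f : Polynomial k,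
      (Submodule.Quotient.mk (v * (g * f)) : J k a) = Submodule.Quotient.mk f := by
    intro f
    rw [Submodule.Quotient.eq]
    refine Ideal.mem_span_singleton.mpr ⟨-(u * f), ?_⟩
    have hvg' : v * g = 1 - u * (X : Polynomial k) ^ a := by linear_combination huv
    rw [← mul_assoc, hvg']
    ring
  -- μ and ν : multiplication by g and v on J_a
  set μ : J k a →ₗ[Polynomial k] J k a :=
    mulMap k a a g (dvd_mul_left _ _) with hμdef
  set ν : J k a →ₗ[Polynomial k] J k a :=
    mulMap k a a v (dvd_mul_left _ _) with hνdef
  have hμν : ∀ x, μ (ν x) = x := by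
    intro x
    obtain ⟨f, rfl⟩ := Submodule.Quotient.mk_surjective _ x
    rw [hνdef, hμdef, mulMap_mk, mulMap_mk]
    rw [show g * (v * f) = v * (g * f) by ring]
    exact hvg f
  have hνμ : ∀ x, ν (μ x) = x := by
    intro x
    obtain ⟨f, rfl⟩ := Submodule.Quotient.mk_surjective _ x
    rw [hμdef, hνdef, mulMap_mk, mulMap_mk]
    exact hvg f
  have hba : b ≤ (b - 2) + a := by omega
  have hτμ : ∀ t, mulTpow k a b (b - 2) (μ t) = cm t := by
    intro t
    obtain ⟨h, rfl⟩ := Submodule.Quotient.mk_surjective _ t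
    rw [hμdef, mulMap_mk, mulTpow_mk _ hba, hcm]
    congr 1
    ring
  -- F' : X' → J_a with τ ∘ F' = Dm
  have hDi : ∀ i : Fin r, ∃ f : Polynomial k,
      Dm (Pi.single i (Submodule.Quotient.mk 1)) =
        Submodule.Quotient.mk ((X : Polynomial k) ^ (b - 2) * f) :=
    fun i => exists_rep hb _ (hD2 _)
  choose f hf using hDi
  set L : (i : Fin r) → (J k (p i) →ₗ[Polynomial k] J k a) :=
    fun i => mulMap k (p i) a (f i) ((pow_dvd_pow X (hp i)).mul_left (f i)) with hLdef
  set F' : X' →ₗ[Polynomial k] J k a :=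
    LinearMap.lsum (Polynomial k) (fun i => J k (p i)) (Polynomial k) L with hF'def
  have hF'single : ∀ (i : Fin r) (x : J k (p i)),
      F' (Pi.single i x) = L i x := by
    intro i x
    rw [hF'def]
    simp only [LinearMap.lsum_apply, LinearMap.sum_apply, LinearMap.comp_apply,
      LinearMap.proj_apply]
    rw [Finset.sum_eq_single i]
    · rw [LinearMap.proj_apply, Pi.single_eq_same]
    · intro j _ hj
      rw [LinearMap.proj_apply, Pi.single_eq_of_ne hj, map_zero]
    · intro hi
      exact absurd (Finset.mem_univ i) hi
  have hτF : ∀ x, mulTpow k a b (b - 2) (F' x) = Dm x := by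
    have : (mulTpow k a b (b - 2)) ∘ₗ F' = Dm := by
      apply LinearMap.pi_ext
      intro i x
      obtain ⟨h, rfl⟩ := Submodule.Quotient.mk_surjective _ x
      have hsingle : (Pi.single i (Submodule.Quotient.mk h : J k (p i)) : X')
          = h • (Pi.single i (Submodule.Quotient.mk 1 : J k (p i)) : X') := by
        rw [← Pi.single_smul, J_mk_smul, mul_one]
      rw [LinearMap.comp_apply, hF'single, hLdef, mulMap_mk, mulTpow_mk _ hba,
        hsingle, map_smul, hf i, J_mk_smul]
      congr 1
      ring
    intro x
    exact LinearMap.congr_fun this x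
  -- the element y used to build E
  set z : Y' := Bm (ν (Submodule.Quotient.mk 1)) with hzdef
  have hz2 : ∀ j : Fin s, ((X : Polynomial k) ^ 2) • z j = 0 := by
    intro j
    have := congrFun (hB2 (ν (Submodule.Quotient.mk 1))) j
    exact this
  have hzj : ∀ j : Fin s, ∃ w : Polynomial k,
      z j = Submodule.Quotient.mk ((X : Polynomial k) ^ (q j - 2) * w) :=
    fun j => exists_rep (le_trans hb (hq j)) _ (hz2 j)
  choose w hw using hzj
  set y : Y' := fun j => Submodule.Quotient.mk ((X : Polynomial k) ^ (q j - b) * w j)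
    with hydef
  have hyb : ((X : Polynomial k) ^ b) • y = 0 := by
    funext j
    rw [Pi.smul_apply, Pi.zero_apply]
    show ((X : Polynomial k) ^ b) •
        (Submodule.Quotient.mk ((X : Polynomial k) ^ (q j - b) * w j) : J k (q j)) = 0
    rw [J_mk_smul, Submodule.Quotient.mk_eq_zero]
    refine Ideal.mem_span_singleton.mpr ⟨w j, ?_⟩
    rw [← mul_assoc, ← pow_add]
    have := hq j
    congr 2
    omega
  have hyz : ((X : Polynomial k) ^ (b - 2)) • y = z := by
    funext j
    rw [Pi.smul_apply]
    show ((X : Polynomial k) ^ (b - 2)) •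
        (Submodule.Quotient.mk ((X : Polynomial k) ^ (q j - b) * w j) : J k (q j)) = z j
    rw [J_mk_smul, ← mul_assoc, ← pow_add,
      show b - 2 + (q j - b) = q j - 2 from by have := hq j; omega]
    exact (hw j).symm
  -- E : J_b → Y'
  set E : J k b →ₗ[Polynomial k] Y' :=
    Submodule.liftQ (Ideal.span {(X : Polynomial k) ^ b})
      (LinearMap.toSpanSingleton (Polynomial k) Y' y)
      (by
        refine Submodule.span_le.mpr ?_
        intro x hx
        rw [Set.mem_singleton_iff] at hx
        subst hx
        simp only [SetLike.mem_coe, LinearMap.mem_ker, LinearMap.toSpanSingleton_apply]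
        exact hyb) with hEdef
  have hE : ∀ h : Polynomial k, E (Submodule.Quotient.mk h) = h • y := by
    intro h
    rw [hEdef, Submodule.liftQ_apply, LinearMap.toSpanSingleton_apply]
  have hEc : ∀ t, E (cm t) = Bm t := by
    intro t
    obtain ⟨h, rfl⟩ := Submodule.Quotient.mk_surjective _ t
    rw [hcm, hE]
    have h1 : h * ((X : Polynomial k) ^ (b - 2) * g) = (h * g) * (X : Polynomial k) ^ (b - 2) := by
      ring
    rw [h1, mul_smul, hyz, hzdef, ← map_smul, ← map_smul, hνdef, J_mk_smul, mulMap_mk]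
    congr 1
    rw [show v * ((h * g) * 1) = v * (g * h) by ring]
    exact hvg h
  -- the new map C'
  set C' : X' →ₗ[Polynomial k] Y' := A - E ∘ₗ Dm with hC'def
  have hC'2 : ∀ x, ((X : Polynomial k) ^ 2) • C' x = 0 := by
    intro x
    rw [hC'def]
    simp only [LinearMap.sub_apply, LinearMap.comp_apply, smul_sub]
    rw [hA2, ← map_smul, hD2, map_zero, sub_zero]
  refine ⟨C', hC'2, ?_⟩
  -- the automorphisms α and β
  set α : (X' × J k a) ≃ₗ[Polynomial k] (X' × J k a) :=
    LinearEquiv.ofLinear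
      (LinearMap.prod (LinearMap.fst _ _ _)
        (μ ∘ₗ LinearMap.snd _ _ _ + F' ∘ₗ LinearMap.fst _ _ _))
      (LinearMap.prod (LinearMap.fst _ _ _)
        (ν ∘ₗ LinearMap.snd _ _ _ - ν ∘ₗ F' ∘ₗ LinearMap.fst _ _ _))
      (by
        apply LinearMap.ext
        rintro ⟨x, t⟩
        simp only [LinearMap.comp_apply, LinearMap.prod_apply, Function.prod_apply,
          LinearMap.fst_apply, LinearMap.snd_apply, LinearMap.add_apply,
          LinearMap.sub_apply, map_sub, LinearMap.id_apply]
        rw [hμν, hμν]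
        simp)
      (by
        apply LinearMap.ext
        rintro ⟨x, t⟩
        simp only [LinearMap.comp_apply, LinearMap.prod_apply, Function.prod_apply,
          LinearMap.fst_apply, LinearMap.snd_apply, LinearMap.add_apply,
          LinearMap.sub_apply, map_add, LinearMap.id_apply]
        rw [hνμ]
        simp) with hαdef
  set β : (Y' × J k b) ≃ₗ[Polynomial k] (Y' × J k b) :=
    LinearEquiv.ofLinear
      (LinearMap.prod (LinearMap.fst _ _ _ - E ∘ₗ LinearMap.snd _ _ _)
        (LinearMap.snd _ _ _))
      (LinearMap.prod (LinearMap.fst _ _ _ + E ∘ₗ LinearMap.snd _ _ _)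
        (LinearMap.snd _ _ _))
      (by
        apply LinearMap.ext
        rintro ⟨yy, t⟩
        simp only [LinearMap.comp_apply, LinearMap.prod_apply, Function.prod_apply,
          LinearMap.fst_apply, LinearMap.snd_apply, LinearMap.add_apply,
          LinearMap.sub_apply, LinearMap.id_apply]
        simp)
      (by
        apply LinearMap.ext
        rintro ⟨yy, t⟩
        simp only [LinearMap.comp_apply, LinearMap.prod_apply, Function.prod_apply,
          LinearMap.fst_apply, LinearMap.snd_apply, LinearMap.add_apply,
          LinearMap.sub_apply, LinearMap.id_apply]
        simp) with hβdef
  refine ⟨α, β, ?_⟩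
  -- decomposition of C
  have hsplit : ∀ (x : X') (t : J k a), C (x, t) = (A x + Bm t, Dm x + cm t) := by
    intro x t
    have h1 : ((x, t) : X' × J k a) = (x, 0) + (0, t) := by simp
    rw [h1, map_add]
    rfl
  apply LinearMap.ext
  rintro ⟨x, t⟩
  simp only [LinearMap.comp_apply, LinearEquiv.coe_coe, hαdef, hβdef,
    LinearEquiv.ofLinear_apply, LinearMap.prod_apply, Function.prod_apply,
    LinearMap.fst_apply, LinearMap.snd_apply, LinearMap.add_apply,
    LinearMap.sub_apply, LinearMap.prodMap_apply, Prod.map_apply]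
  rw [hsplit]
  simp only [map_add]
  rw [hτμ, hτF, hEc, Prod.mk.injEq]
  refine ⟨?_, ?_⟩
  · rw [hC'def]
    simp only [LinearMap.sub_apply, LinearMap.comp_apply]
    abel
  · abel
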